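/- Suppose X_1,…,X_n forms a Markov chain and K = {1}. Then under the sequential privacy mechanism, for every i > 1, whenever the previously released symbol satisfies y_{i−1} ≠ ∗, one has P(X_i = a | X_1 = u, Y_{[i−1]} = y_{[i−1]}) = P(X_i = a | X_{i−1} = y_{i−1}) for all a ∈ 𝒳 and all u with positive conditional probability; consequently the mechanism releases position i without erasure with probability one, i.e., P(Y_i = X_i | X = x, Y_{[i−1]} = y_{[i−1]}) = 1. -/

import Mathlib

open Finset
open scoped Classical

noncomputable section

namespace GenotypeHiding

variable {X : Type} [Fintype X] [DecidableEq X]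

/-- `y` agrees with the history `h` on all coordinates `j` with `j < t`
(i.e. the event `Y_{[t]} = h_{[t]}`, zero-based). -/
def agreeN {n : ℕ} (t : ℕ) (y h : Fin n → Option X) : Prop :=
  ∀ j : Fin n, (j : ℕ) < t → y j = h j

/-- `P(X = x, Y_{[t]} = h_{[t]})` under the joint law `J` of `(X, Y)`. -/
def prXH {n : ℕ} (J : (Fin n → X) → (Fin n → Option X) → ℝ) (t : ℕ)
    (x : Fin n → X) (h : Fin n → Option X) : ℝ :=
  ∑ y : Fin n → Option X, if agreeN t y h then J x y else 0

/-- `P(Y_i = b, X = x, Y_{[t]} = h_{[t]})` under the joint law `J`. -/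
def prXHY {n : ℕ} (J : (Fin n → X) → (Fin n → Option X) → ℝ) (t : ℕ)
    (x : Fin n → X) (h : Fin n → Option X) (i : Fin n) (b : Option X) : ℝ :=
  ∑ y : Fin n → Option X, if y i = b ∧ agreeN t y h then J x y else 0

/-- `P(Y_{[t]} = h_{[t]})` under the joint law `J`. -/
def prH {n : ℕ} (J : (Fin n → X) → (Fin n → Option X) → ℝ) (t : ℕ)
    (h : Fin n → Option X) : ℝ :=
  ∑ x : Fin n → X, prXH J t x h

/-- `P(X_{i₀} = u, Y_{[t]} = h_{[t]})` under the joint law `J` (here `i₀` is the single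
sensitive position). -/
def pr1H {n : ℕ} (J : (Fin n → X) → (Fin n → Option X) → ℝ) (i₀ : Fin n) (t : ℕ)
    (u : X) (h : Fin n → Option X) : ℝ :=
  ∑ x : Fin n → X, ∑ y : Fin n → Option X,
    if x i₀ = u ∧ agreeN t y h then J x y else 0

/-- `P(X_i = a, X_{i₀} = u, Y_{[t]} = h_{[t]})` under the joint law `J`. -/
def prI1H {n : ℕ} (J : (Fin n → X) → (Fin n → Option X) → ℝ) (i₀ : Fin n) (t : ℕ)
    (i : Fin n) (a : X) (u : X) (h : Fin n → Option X) : ℝ :=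
  ∑ x : Fin n → X, ∑ y : Fin n → Option X,
    if x i = a ∧ x i₀ = u ∧ agreeN t y h then J x y else 0

/-- `P(X_i = a | X_{i₀} = u, Y_{[t]} = h_{[t]})` under the joint law `J`. -/
def cond1 {n : ℕ} (J : (Fin n → X) → (Fin n → Option X) → ℝ) (i₀ : Fin n) (t : ℕ)
    (i : Fin n) (a : X) (u : X) (h : Fin n → Option X) : ℝ :=
  prI1H J i₀ t i a u h / pr1H J i₀ t u h

/-- `min_u P(X_i = a | X_{i₀} = u, Y_{[t]} = h_{[t]})`, the minimum being over all `u` with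
`P(X_{i₀} = u, Y_{[t]} = h_{[t]}) > 0`. -/
def minC1 {n : ℕ} (J : (Fin n → X) → (Fin n → Option X) → ℝ) (i₀ : Fin n) (t : ℕ)
    (i : Fin n) (a : X) (h : Fin n → Option X) : ℝ :=
  sInf {r : ℝ | ∃ u : X, 0 < pr1H J i₀ t u h ∧ r = cond1 J i₀ t i a u h}

/-- `J` is the joint law of `(X, Y)` where `Y` is generated from `X ∼ p` by the sequential
privacy mechanism with the single sensitive position `K = {i₀}`. -/
def IsSequentialMechanism1 {n : ℕ} (p : (Fin n → X) → ℝ) (i₀ : Fin n)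
    (J : (Fin n → X) → (Fin n → Option X) → ℝ) : Prop :=
  (∀ x y, 0 ≤ J x y) ∧
  (∀ x, ∑ y : Fin n → Option X, J x y = p x) ∧
  (∀ x y, 0 < J x y → ∀ i : Fin n, y i = some (x i) ∨ y i = none) ∧
  (∀ (i : Fin n) (x : Fin n → X) (h : Fin n → Option X), 0 < prXH J (i : ℕ) x h →
    prXHY J (i : ℕ) x h i (some (x i))
      = (minC1 J i₀ (i : ℕ) i (x i) h / cond1 J i₀ (i : ℕ) i (x i) (x i₀) h)
          * prXH J (i : ℕ) x h)

/-- `P(X_{[t]} = v_{[t]})`: the probability that the first `t` coordinates of `X` agree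
with `v`. -/
def prPre {n : ℕ} (p : (Fin n → X) → ℝ) (t : ℕ) (v : Fin n → X) : ℝ :=
  ∑ x : Fin n → X, if (∀ j : Fin n, (j : ℕ) < t → x j = v j) then p x else 0

/-- `P(X_i = a)`. -/
def prOne {n : ℕ} (p : (Fin n → X) → ℝ) (i : Fin n) (a : X) : ℝ :=
  ∑ x : Fin n → X, if x i = a then p x else 0

/-- `P(X_i = a ∧ X_{i'} = a')`. -/
def prTwo {n : ℕ} (p : (Fin n → X) → ℝ) (i i' : Fin n) (a a' : X) : ℝ :=
  ∑ x : Fin n → X, if x i = a ∧ x i' = a' then p x else 0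

/-- `X_1 → X_2 → ⋯ → X_n` is a Markov chain: for every `t`,
`P(X_{[t+2]}) ⋅ P(X_{t+1}) = P(X_{[t+1]}) ⋅ P(X_{t+1}, X_{t+2})` (zero-based indices),
which is the cross-multiplied form of the chain rule factorization. -/
def IsMarkov {n : ℕ} (p : (Fin n → X) → ℝ) : Prop :=
  ∀ (t : ℕ) (ht : t + 1 < n) (v : Fin n → X),
    prPre p (t + 2) v * prOne p ⟨t, by omega⟩ (v ⟨t, by omega⟩)
      = prPre p (t + 1) v
          * prTwo p ⟨t, by omega⟩ ⟨t + 1, ht⟩ (v ⟨t, by omega⟩) (v ⟨t + 1, ht⟩)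

set_option linter.unusedSectionVars false
section Aux
variable {X : Type} [Fintype X] [DecidableEq X] {n : ℕ}
variable {J : (Fin n → X) → (Fin n → Option X) → ℝ}
variable {p : (Fin n → X) → ℝ} {i₀ : Fin n}
lemma prXH_nonneg (hJ0 : ∀ x y, 0 ≤ J x y) (t : ℕ) (x : Fin n → X) (h : Fin n → Option X) :
    0 ≤ prXH J t x h :=
  Finset.sum_nonneg fun y _ => by split_ifs; exacts [hJ0 x y, le_refl 0]

lemma prXHY_nonneg (hJ0 : ∀ x y, 0 ≤ J x y) (t : ℕ) (x : Fin n → X) (h : Fin n → Option X)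
    (j : Fin n) (c : Option X) : 0 ≤ prXHY J t x h j c :=
  Finset.sum_nonneg fun y _ => by split_ifs; exacts [hJ0 x y, le_refl 0]

lemma prXHY_le_prXH (hJ0 : ∀ x y, 0 ≤ J x y) (t : ℕ) (x : Fin n → X) (h : Fin n → Option X)
    (j : Fin n) (c : Option X) : prXHY J t x h j c ≤ prXH J t x h := by
  refine Finset.sum_le_sum fun y _ => ?_
  split_ifs with h1 h2 h3
  · exact le_refl _
  · exact absurd h1.2 h2
  · exact hJ0 x y
  · exact le_refl 0

lemma prXH_succ_le (hJ0 : ∀ x y, 0 ≤ J x y) (t : ℕ) (x : Fin n → X) (h : Fin n → Option X) :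
    prXH J (t+1) x h ≤ prXH J t x h := by
  refine Finset.sum_le_sum fun y _ => ?_
  split_ifs with h1 h2 h3
  · exact le_refl _
  · exact absurd (fun j hj => h1 j (by omega)) h2
  · exact hJ0 x y
  · exact le_refl 0

lemma prXH_le_p (hJ : IsSequentialMechanism1 p i₀ J) (t : ℕ) (x : Fin n → X)
    (h : Fin n → Option X) : prXH J t x h ≤ p x := by
  rw [← hJ.2.1 x]
  refine Finset.sum_le_sum fun y _ => ?_
  split_ifs
  · exact le_refl _
  · exact hJ.1 x y
lemma agreeN_succ_iff {t : ℕ} (ht : t < n) (y h : Fin n → Option X) :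
    agreeN (t+1) y h ↔ y ⟨t, ht⟩ = h ⟨t, ht⟩ ∧ agreeN t y h := by
  constructor
  · intro ha
    exact ⟨ha ⟨t, ht⟩ (by simp), fun j hj => ha j (by omega)⟩
  · rintro ⟨h1, h2⟩ j hj
    rcases Nat.lt_or_ge (j : ℕ) t with hlt | hge
    · exact h2 j hlt
    · have : j = ⟨t, ht⟩ := Fin.ext (by simp; omega)
      rw [this]; exact h1

lemma prXH_succ_eq {t : ℕ} (ht : t < n) (x : Fin n → X) (h : Fin n → Option X) :
    prXH J (t+1) x h = prXHY J t x h ⟨t, ht⟩ (h ⟨t, ht⟩) := by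
  refine Finset.sum_congr rfl fun y _ => ?_
  rw [if_congr (agreeN_succ_iff ht y h) rfl rfl]

lemma prXHY_vanish (hJ : IsSequentialMechanism1 p i₀ J) (t : ℕ) (x : Fin n → X)
    (h : Fin n → Option X) (j : Fin n) (c : X) (hc : x j ≠ c) :
    prXHY J t x h j (some c) = 0 := by
  refine Finset.sum_eq_zero fun y _ => ?_
  split_ifs with h1
  · by_contra hne
    have hpos : 0 < J x y := lt_of_le_of_ne (hJ.1 x y) (Ne.symm hne)
    rcases hJ.2.2.1 x y hpos j with h2 | h2
    · rw [h1.1] at h2; exact hc (Option.some_injective X h2).symm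
    · rw [h1.1] at h2; exact absurd h2 (Option.some_ne_none _)
  · rfl

lemma prXH_split (hJ : IsSequentialMechanism1 p i₀ J) (t : ℕ) (x : Fin n → X)
    (h : Fin n → Option X) (j : Fin n) :
    prXH J t x h = prXHY J t x h j (some (x j)) + prXHY J t x h j none := by
  rw [prXH, prXHY, prXHY, ← Finset.sum_add_distrib]
  refine Finset.sum_congr rfl fun y _ => ?_
  by_cases ha : agreeN t y h
  · rcases eq_or_lt_of_le (hJ.1 x y) with hz | hpos
    · split_ifs <;> simp [← hz]
    · rcases hJ.2.2.1 x y hpos j with h2 | h2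
      · rw [if_pos ha, if_pos ⟨h2, ha⟩, if_neg (by simp [h2]), add_zero]
      · rw [if_pos ha, if_neg (by simp [h2]), if_pos ⟨h2, ha⟩, zero_add]
  · simp [ha]
lemma prXH_succ_zero (hJ0 : ∀ x y, 0 ≤ J x y) {t : ℕ} {x : Fin n → X} {h : Fin n → Option X}
    (h0 : prXH J t x h = 0) : prXH J (t+1) x h = 0 :=
  le_antisymm (h0 ▸ prXH_succ_le hJ0 t x h) (prXH_nonneg hJ0 _ x h)

lemma cross (hn : 1 ≤ n) (hJ : IsSequentialMechanism1 p ⟨0, hn⟩ J) (h : Fin n → Option X) :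
    ∀ (t : ℕ) (x x' : Fin n → X), (∀ j : Fin n, (j : ℕ) < t → x j = x' j) →
      prXH J t x h * p x' = prXH J t x' h * p x := by
  intro t
  induction t with
  | zero =>
    intro x x' _
    have e : ∀ z : Fin n → X, prXH J 0 z h = p z := by
      intro z
      rw [prXH, ← hJ.2.1 z]
      refine Finset.sum_congr rfl fun y _ => ?_
      rw [if_pos (show agreeN 0 y h from fun j hj => absurd hj (by omega))]
    rw [e, e]; ring
  | succ t ih =>
    intro x x' hag
    by_cases ht : t < n
    · set j : Fin n := ⟨t, ht⟩ with hj
      have hxj : x j = x' j := hag j (by simp [hj])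
      have h00 : x ⟨0, hn⟩ = x' ⟨0, hn⟩ := hag ⟨0, hn⟩ (by simp)
      have hag' : ∀ k : Fin n, (k : ℕ) < t → x k = x' k := fun k hk => hag k (by omega)
      have ihx := ih x x' hag'
      -- degenerate cases
      by_cases hx : prXH J t x h = 0
      · have l0 : prXH J (t+1) x h = 0 := prXH_succ_zero hJ.1 hx
        have : prXH J t x' h * p x = 0 := by rw [← ihx, hx, zero_mul]
        rcases mul_eq_zero.mp this with h1 | h1
        · rw [l0, prXH_succ_zero hJ.1 h1, zero_mul, zero_mul]
        · rw [l0, h1, zero_mul, mul_zero]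
      by_cases hx' : prXH J t x' h = 0
      · have l0 : prXH J (t+1) x' h = 0 := prXH_succ_zero hJ.1 hx'
        have : prXH J t x h * p x' = 0 := by rw [ihx, hx', zero_mul]
        rcases mul_eq_zero.mp this with h1 | h1
        · rw [l0, prXH_succ_zero hJ.1 h1, zero_mul, zero_mul]
        · rw [l0, h1, mul_zero, zero_mul]
      have hxp : 0 < prXH J t x h := lt_of_le_of_ne (prXH_nonneg hJ.1 t x h) (Ne.symm hx)
      have hxp' : 0 < prXH J t x' h := lt_of_le_of_ne (prXH_nonneg hJ.1 t x' h) (Ne.symm hx')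
      have mechx := hJ.2.2.2 j x h (by rwa [show ((j : ℕ) = t) from rfl])
      have mechx' := hJ.2.2.2 j x' h (by rwa [show ((j : ℕ) = t) from rfl])
      rw [show ((j : ℕ) = t) from rfl] at mechx mechx'
      set r : ℝ := minC1 J ⟨0, hn⟩ t j (x j) h / cond1 J ⟨0, hn⟩ t j (x j) (x ⟨0, hn⟩) h with hr
      have hrr : minC1 J ⟨0, hn⟩ t j (x' j) h / cond1 J ⟨0, hn⟩ t j (x' j) (x' ⟨0, hn⟩) h = r := by
        rw [hr, hxj, h00]
      rw [hrr] at mechx'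
      cases hc : h j with
      | some c =>
        rw [prXH_succ_eq ht x h, prXH_succ_eq ht x' h, hc, ← hj]
        by_cases hxc : x j = c
        · rw [← hxj] at mechx'
          rw [← hxc, mechx, mechx']
          rw [mul_assoc, mul_assoc, ihx]
        · rw [prXHY_vanish hJ t x h j c hxc, prXHY_vanish hJ t x' h j c (hxj ▸ hxc),
            zero_mul, zero_mul]
      | none =>
        have ex : prXHY J t x h j none = (1 - r) * prXH J t x h := by
          have := prXH_split hJ t x h j
          rw [mechx] at this; linarith [this]
        have ex' : prXHY J t x' h j none = (1 - r) * prXH J t x' h := by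
          have := prXH_split hJ t x' h j
          rw [mechx'] at this; linarith [this]
        rw [prXH_succ_eq ht x h, prXH_succ_eq ht x' h, hc, ← hj, ex, ex',
          mul_assoc, mul_assoc, ihx]
    · -- t ≥ n: agreeN (t+1) = agreeN t
      have e : ∀ z : Fin n → X, prXH J (t+1) z h = prXH J t z h := by
        intro z
        refine Finset.sum_congr rfl fun y _ => ?_
        refine if_congr ⟨fun ha k hk => ha k (by omega), fun ha k hk => ha k (by omega)⟩ rfl rfl
      · rw [e, e]
        exact ih x x' (fun k hk => hag k (by omega))
lemma sum_mul_sum_ite {α β : Type*} [Fintype α] [Fintype β] (c : α → Prop) [DecidablePred c] (d : β → Prop)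
    [DecidablePred d] (f : α → ℝ) (g : β → ℝ) :
    (∑ x : α, if c x then f x else 0) * (∑ z : β, if d z then g z else 0)
      = ∑ x : α, ∑ z : β, if c x ∧ d z then f x * g z else 0 := by
  rw [Finset.sum_mul_sum]
  refine Finset.sum_congr rfl fun x _ => Finset.sum_congr rfl fun z _ => ?_
  split_ifs <;> first | rfl | tauto | simp

/-- single-sum form of prI1H -/
lemma prI1H_eq (J : (Fin n → X) → (Fin n → Option X) → ℝ) (i₀ : Fin n) (t : ℕ) (i : Fin n)
    (a u : X) (h : Fin n → Option X) :
    prI1H J i₀ t i a u h = ∑ x : Fin n → X, if x i = a ∧ x i₀ = u then prXH J t x h else 0 := by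
  refine Finset.sum_congr rfl fun x _ => ?_
  by_cases hc : x i = a ∧ x i₀ = u
  · rw [if_pos hc, prXH]
    exact Finset.sum_congr rfl fun y _ => if_congr (by tauto) rfl rfl
  · rw [if_neg hc]
    exact Finset.sum_eq_zero fun y _ => if_neg (by tauto)

lemma pr1H_eq (J : (Fin n → X) → (Fin n → Option X) → ℝ) (i₀ : Fin n) (t : ℕ)
    (u : X) (h : Fin n → Option X) :
    pr1H J i₀ t u h = ∑ x : Fin n → X, if x i₀ = u then prXH J t x h else 0 := by
  refine Finset.sum_congr rfl fun x _ => ?_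
  by_cases hc : x i₀ = u
  · rw [if_pos hc, prXH]
    exact Finset.sum_congr rfl fun y _ => if_congr (by tauto) rfl rfl
  · rw [if_neg hc]
    exact Finset.sum_eq_zero fun y _ => if_neg (by tauto)

lemma sum_ite_and_const {β : Type*} [Fintype β] (c : Prop) [Decidable c] (d : β → Prop)
    [DecidablePred d] (f : β → ℝ) :
    (∑ y : β, if c ∧ d y then f y else 0) = if c then ∑ y : β, if d y then f y else 0 else 0 := by
  split_ifs with hc
  · exact Finset.sum_congr rfl fun y _ => by simp [hc]
  · exact Finset.sum_eq_zero fun y _ => by simp [hc]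
lemma exists_pos_term {β : Type*} [Fintype β] {f : β → ℝ} (hx : 0 < ∑ y : β, f y) :
    ∃ y : β, 0 < f y := by
  obtain ⟨y, _, hy⟩ := Finset.exists_lt_of_sum_lt (f := fun _ : β => (0:ℝ)) (g := f)
    (by simpa using hx)
  exact ⟨y, hy⟩

lemma stepA (hn : 1 ≤ n) (hJ : IsSequentialMechanism1 p ⟨0, hn⟩ J) (h : Fin n → Option X)
    (i : Fin n) (a : X) (v : Fin n → X) :
    (∑ x : Fin n → X, if (∀ j : Fin n, (j : ℕ) < (i : ℕ) → x j = v j) ∧ x i = a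
        then prXH J (i : ℕ) x h else 0) * prPre p (i : ℕ) v
      = (∑ x : Fin n → X, if (∀ j : Fin n, (j : ℕ) < (i : ℕ) → x j = v j)
          then prXH J (i : ℕ) x h else 0)
        * (∑ z : Fin n → X, if (∀ j : Fin n, (j : ℕ) < (i : ℕ) → z j = v j) ∧ z i = a
            then p z else 0) := by
  rw [prPre, sum_mul_sum_ite, sum_mul_sum_ite, Finset.sum_comm]
  refine Finset.sum_congr rfl fun w _ => Finset.sum_congr rfl fun w' _ => ?_
  by_cases hc : ((∀ j : Fin n, (j : ℕ) < (i : ℕ) → w' j = v j) ∧ w' i = a)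
      ∧ (∀ j : Fin n, (j : ℕ) < (i : ℕ) → w j = v j)
  · rw [if_pos hc, if_pos (by tauto)]
    exact cross hn hJ h (i : ℕ) w' w fun j hj => (hc.1.1 j hj).trans (hc.2 j hj).symm
  · rw [if_neg hc, if_neg (by tauto)]

lemma stepB (hM : IsMarkov p) (i : Fin n) (hi : 0 < (i : ℕ)) (a : X) (v : Fin n → X) :
    (∑ z : Fin n → X, if (∀ j : Fin n, (j : ℕ) < (i : ℕ) → z j = v j) ∧ z i = a
        then p z else 0)
      * prOne p ⟨(i : ℕ) - 1, by omega⟩ (v ⟨(i : ℕ) - 1, by omega⟩)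
    = prPre p (i : ℕ) v
      * prTwo p ⟨(i : ℕ) - 1, by omega⟩ i (v ⟨(i : ℕ) - 1, by omega⟩) a := by
  have ht : ((i : ℕ) - 1) + 1 < n := by omega
  have key := hM ((i : ℕ) - 1) ht (Function.update v i a)
  have e1 : (⟨(i : ℕ) - 1 + 1, ht⟩ : Fin n) = i := by
    apply Fin.ext; simp; omega
  rw [e1] at key
  have hne : (⟨(i : ℕ) - 1, by omega⟩ : Fin n) ≠ i := by
    apply Fin.ne_of_val_ne; simp; omega
  have ew1 : Function.update v i a ⟨(i : ℕ) - 1, by omega⟩ = v ⟨(i : ℕ) - 1, by omega⟩ :=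
    Function.update_of_ne hne a v
  have ewi : Function.update v i a i = a := Function.update_self i a v
  rw [ew1, ewi] at key
  have e2 : prPre p ((i : ℕ) - 1 + 2) (Function.update v i a)
      = ∑ z : Fin n → X, if (∀ j : Fin n, (j : ℕ) < (i : ℕ) → z j = v j) ∧ z i = a
          then p z else 0 := by
    refine Finset.sum_congr rfl fun z _ => if_congr ?_ rfl rfl
    constructor
    · intro hz
      constructor
      · intro j hj
        have := hz j (by omega)
        rwa [Function.update_of_ne (Fin.ne_of_val_ne (by omega)) a v] at this
      · have := hz i (by omega)
        rwa [Function.update_self] at this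
    · rintro ⟨h1, h2⟩ j hj
      by_cases hji : (j : ℕ) < (i : ℕ)
      · rw [Function.update_of_ne (Fin.ne_of_val_ne (by omega)) a v]
        exact h1 j hji
      · have hj2 : j = i := Fin.ext (by omega)
        rw [hj2, Function.update_self]
        exact h2
  have e3 : prPre p ((i : ℕ) - 1 + 1) (Function.update v i a) = prPre p (i : ℕ) v := by
    refine Finset.sum_congr rfl fun z _ => if_congr ?_ rfl rfl
    constructor
    · intro hz j hj
      have := hz j (by omega)
      rwa [Function.update_of_ne (Fin.ne_of_val_ne (by omega)) a v] at this
    · intro hz j hj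
      rw [Function.update_of_ne (Fin.ne_of_val_ne (by omega)) a v]
      exact hz j (by omega)
  rw [e2, e3] at key
  exact key

lemma forcedB (hn : 1 ≤ n) (hJ : IsSequentialMechanism1 p ⟨0, hn⟩ J) (i : Fin n)
    (hi : 0 < (i : ℕ)) (h : Fin n → Option X) (b : X)
    (hb : h ⟨(i : ℕ) - 1, by omega⟩ = some b) (x : Fin n → X)
    (hx : x ⟨(i : ℕ) - 1, by omega⟩ ≠ b) : prXH J (i : ℕ) x h = 0 := by
  refine Finset.sum_eq_zero fun y _ => ?_
  split_ifs with ha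
  · by_contra hne
    have hpos : 0 < J x y := lt_of_le_of_ne (hJ.1 x y) (Ne.symm hne)
    have hy : y ⟨(i : ℕ) - 1, by omega⟩ = some b := by
      rw [← hb]; exact ha _ (by simp; omega)
    rcases hJ.2.2.1 x y hpos ⟨(i : ℕ) - 1, by omega⟩ with h2 | h2
    · rw [hy] at h2
      exact hx (Option.some_injective X h2).symm
    · rw [hy] at h2
      exact absurd h2 (Option.some_ne_none _)
  · rfl
lemma stepC (hn : 1 ≤ n) (hJ : IsSequentialMechanism1 p ⟨0, hn⟩ J) (hM : IsMarkov p)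
    (hp0 : ∀ x, 0 ≤ p x) (i : Fin n) (hi : 0 < (i : ℕ)) (h : Fin n → Option X) (b : X)
    (hb : h ⟨(i : ℕ) - 1, by omega⟩ = some b) (a : X) (v : Fin n → X) :
    (∑ x : Fin n → X, if (∀ j : Fin n, (j : ℕ) < (i : ℕ) → x j = v j) ∧ x i = a
        then prXH J (i : ℕ) x h else 0) * prOne p ⟨(i : ℕ) - 1, by omega⟩ b
      = (∑ x : Fin n → X, if (∀ j : Fin n, (j : ℕ) < (i : ℕ) → x j = v j)
          then prXH J (i : ℕ) x h else 0)
        * prTwo p ⟨(i : ℕ) - 1, by omega⟩ i b a := by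
  by_cases hv : v ⟨(i : ℕ) - 1, by omega⟩ = b
  · by_cases hP : prPre p (i : ℕ) v = 0
    · -- all prXH in the class vanish
      have hz : ∀ z : Fin n → X, (∀ j : Fin n, (j : ℕ) < (i : ℕ) → z j = v j) →
          prXH J (i : ℕ) z h = 0 := by
        intro z hzv
        have hpz : p z = 0 := by
          have := (Finset.sum_eq_zero_iff_of_nonneg
            (fun z _ => by split_ifs; exacts [hp0 _, le_refl 0])).mp hP z (Finset.mem_univ z)
          rwa [if_pos hzv] at this
        exact le_antisymm (hpz ▸ prXH_le_p hJ (i : ℕ) z h) (prXH_nonneg hJ.1 _ z h)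
      rw [Finset.sum_eq_zero fun x _ => ?_, Finset.sum_eq_zero fun x _ => ?_,
        zero_mul, zero_mul]
      · split_ifs with hc
        · exact hz x hc
        · rfl
      · split_ifs with hc
        · exact hz x hc.1
        · rfl
    · have hA := stepA hn hJ h i a v
      have hB := stepB hM i hi a v
      rw [hv] at hB
      refine mul_right_cancel₀ hP ?_
      calc (∑ x : Fin n → X, if (∀ j : Fin n, (j : ℕ) < (i : ℕ) → x j = v j) ∧ x i = a
              then prXH J (i : ℕ) x h else 0) * prOne p ⟨(i : ℕ) - 1, by omega⟩ b
              * prPre p (i : ℕ) v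
          = ((∑ x : Fin n → X, if (∀ j : Fin n, (j : ℕ) < (i : ℕ) → x j = v j) ∧ x i = a
              then prXH J (i : ℕ) x h else 0) * prPre p (i : ℕ) v)
              * prOne p ⟨(i : ℕ) - 1, by omega⟩ b := by ring
        _ = ((∑ x : Fin n → X, if (∀ j : Fin n, (j : ℕ) < (i : ℕ) → x j = v j)
              then prXH J (i : ℕ) x h else 0)
            * ((∑ z : Fin n → X, if (∀ j : Fin n, (j : ℕ) < (i : ℕ) → z j = v j) ∧ z i = a
                then p z else 0) * prOne p ⟨(i : ℕ) - 1, by omega⟩ b)) := by rw [hA]; ring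
        _ = (∑ x : Fin n → X, if (∀ j : Fin n, (j : ℕ) < (i : ℕ) → x j = v j)
              then prXH J (i : ℕ) x h else 0)
            * (prPre p (i : ℕ) v * prTwo p ⟨(i : ℕ) - 1, by omega⟩ i b a) := by rw [hB]
        _ = (∑ x : Fin n → X, if (∀ j : Fin n, (j : ℕ) < (i : ℕ) → x j = v j)
              then prXH J (i : ℕ) x h else 0)
            * prTwo p ⟨(i : ℕ) - 1, by omega⟩ i b a * prPre p (i : ℕ) v := by ring
  · -- class incompatible with forced symbol b
    have hz : ∀ z : Fin n → X, (∀ j : Fin n, (j : ℕ) < (i : ℕ) → z j = v j) →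
        prXH J (i : ℕ) z h = 0 := by
      intro z hzv
      refine forcedB hn hJ i hi h b hb z ?_
      rw [hzv ⟨(i : ℕ) - 1, by omega⟩ (by simp; omega)]
      exact hv
    rw [Finset.sum_eq_zero fun x _ => ?_, Finset.sum_eq_zero fun x _ => ?_,
      zero_mul, zero_mul]
    · split_ifs with hc
      · exact hz x hc
      · rfl
    · split_ifs with hc
      · exact hz x hc.1
      · rfl
lemma card_prefix_eq (t : ℕ) (x x' : Fin n → X) :
    (Finset.univ.filter fun v : Fin n → X => ∀ j : Fin n, (j : ℕ) < t → v j = x j).card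
      = (Finset.univ.filter fun v : Fin n → X => ∀ j : Fin n, (j : ℕ) < t → v j = x' j).card := by
  apply Finset.card_bij' (i := fun v _ => fun j : Fin n => if (j : ℕ) < t then x' j else v j)
    (j := fun v _ => fun j : Fin n => if (j : ℕ) < t then x j else v j)
  · intro v hv
    simp only [Finset.mem_filter, Finset.mem_univ, true_and] at hv ⊢
    intro j hj
    rw [if_pos hj]
  · intro v hv
    simp only [Finset.mem_filter, Finset.mem_univ, true_and] at hv ⊢
    intro j hj
    rw [if_pos hj]
  · intro v hv
    simp only [Finset.mem_filter, Finset.mem_univ, true_and] at hv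
    funext j
    by_cases hj : (j : ℕ) < t
    · simp only [if_pos hj]
      exact (hv j hj).symm
    · simp only [if_neg hj]
  · intro v hv
    simp only [Finset.mem_filter, Finset.mem_univ, true_and] at hv
    funext j
    by_cases hj : (j : ℕ) < t
    · simp only [if_pos hj]
      exact (hv j hj).symm
    · simp only [if_neg hj]

lemma sum_over_v (hn : 1 ≤ n) (i : Fin n) (hi : 0 < (i : ℕ)) (u : X)
    (Q : (Fin n → X) → Prop) (F : (Fin n → X) → ℝ) (C : ℕ)
    (hC : ∀ x : Fin n → X,
      (Finset.univ.filter fun v : Fin n → X => ∀ j : Fin n, (j : ℕ) < (i : ℕ) → v j = x j).card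
        = C) :
    (∑ v : Fin n → X, if v ⟨0, hn⟩ = u
        then (∑ x : Fin n → X, if (∀ j : Fin n, (j : ℕ) < (i : ℕ) → x j = v j) ∧ Q x
          then F x else 0) else 0)
      = (C : ℝ) * ∑ x : Fin n → X, if Q x ∧ x ⟨0, hn⟩ = u then F x else 0 := by
  have lhs1 : ∀ v : Fin n → X,
      (if v ⟨0, hn⟩ = u
        then (∑ x : Fin n → X, if (∀ j : Fin n, (j : ℕ) < (i : ℕ) → x j = v j) ∧ Q x
          then F x else 0) else 0)
      = ∑ x : Fin n → X,
          if (Q x ∧ x ⟨0, hn⟩ = u) ∧ (∀ j : Fin n, (j : ℕ) < (i : ℕ) → v j = x j)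
            then F x else 0 := by
    intro v
    split_ifs with hv
    · refine Finset.sum_congr rfl fun x _ => if_congr ?_ rfl rfl
      constructor
      · rintro ⟨h1, h2⟩
        have h0 : x ⟨0, hn⟩ = v ⟨0, hn⟩ := h1 ⟨0, hn⟩ (by simpa using hi)
        exact ⟨⟨h2, h0.trans hv⟩, fun j hj => (h1 j hj).symm⟩
      · rintro ⟨⟨h1, h2⟩, h3⟩
        exact ⟨fun j hj => (h3 j hj).symm, h1⟩
    · refine (Finset.sum_eq_zero fun x _ => ?_).symm
      split_ifs with hc
      · exfalso
        apply hv
        rw [hc.2 ⟨0, hn⟩ (by simpa using hi)]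
        exact hc.1.2
      · rfl
  rw [Finset.sum_congr rfl fun v _ => lhs1 v, Finset.sum_comm]
  rw [Finset.mul_sum]
  refine Finset.sum_congr rfl fun x _ => ?_
  rw [sum_ite_and_const]
  split_ifs with hc
  · rw [← Finset.sum_filter, Finset.sum_const, hC x, nsmul_eq_mul]
  · rw [mul_zero]
lemma sum_ite_congr {β : Type*} [Fintype β] {c d : β → Prop} {i1 : ∀ y, Decidable (c y)}
    {i2 : ∀ y, Decidable (d y)} (hcd : ∀ y, c y ↔ d y) (f : β → ℝ) :
    (∑ y : β, @ite _ (c y) (i1 y) (f y) 0) = ∑ y : β, @ite _ (d y) (i2 y) (f y) 0 :=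
  Finset.sum_congr rfl fun y _ => by
    by_cases hy : c y
    · rw [if_pos hy, if_pos ((hcd y).mp hy)]
    · rw [if_neg hy, if_neg (fun hd => hy ((hcd y).mpr hd))]

lemma identityK (hn : 1 ≤ n) (hX : 2 ≤ Fintype.card X)
    (hJ : IsSequentialMechanism1 p ⟨0, hn⟩ J) (hM : IsMarkov p) (hp0 : ∀ x, 0 ≤ p x)
    (i : Fin n) (hi : 0 < (i : ℕ)) (h : Fin n → Option X) (b : X)
    (hb : h ⟨(i : ℕ) - 1, Nat.lt_of_le_of_lt (Nat.sub_le _ _) i.isLt⟩ = some b) (a u : X) :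
    prI1H J ⟨0, hn⟩ (i : ℕ) i a u h * prOne p ⟨(i : ℕ) - 1, Nat.lt_of_le_of_lt (Nat.sub_le _ _) i.isLt⟩ b
      = pr1H J ⟨0, hn⟩ (i : ℕ) u h * prTwo p ⟨(i : ℕ) - 1, Nat.lt_of_le_of_lt (Nat.sub_le _ _) i.isLt⟩ i b a := by
  have hne : Nonempty X := Fintype.card_pos_iff.mp (by omega)
  obtain ⟨x₀⟩ := hne
  set C : ℕ := (Finset.univ.filter
    fun v : Fin n → X => ∀ j : Fin n, (j : ℕ) < (i : ℕ) → v j = (fun _ => x₀) j).card with hCdef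
  have hCall : ∀ x : Fin n → X, (Finset.univ.filter
      fun v : Fin n → X => ∀ j : Fin n, (j : ℕ) < (i : ℕ) → v j = x j).card = C :=
    fun x => card_prefix_eq (i : ℕ) x (fun _ => x₀)
  have hCpos : 0 < C := Finset.card_pos.mpr ⟨fun _ => x₀, by simp⟩
  set Sa : ℝ := ∑ x : Fin n → X, if x i = a ∧ x ⟨0, hn⟩ = u then prXH J (i : ℕ) x h else 0
    with hSa
  set S : ℝ := ∑ x : Fin n → X, if x ⟨0, hn⟩ = u then prXH J (i : ℕ) x h else 0 with hS
  set Av : ℝ := ∑ v : Fin n → X, if v ⟨0, hn⟩ = u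
    then (∑ x : Fin n → X, if (∀ j : Fin n, (j : ℕ) < (i : ℕ) → x j = v j) ∧ x i = a
      then prXH J (i : ℕ) x h else 0) else 0 with hAv
  set Tv : ℝ := ∑ v : Fin n → X, if v ⟨0, hn⟩ = u
    then (∑ x : Fin n → X, if (∀ j : Fin n, (j : ℕ) < (i : ℕ) → x j = v j)
      then prXH J (i : ℕ) x h else 0) else 0 with hTv
  have eI : prI1H J ⟨0, hn⟩ (i : ℕ) i a u h = Sa := prI1H_eq J ⟨0, hn⟩ (i : ℕ) i a u h
  have eH : pr1H J ⟨0, hn⟩ (i : ℕ) u h = S := pr1H_eq J ⟨0, hn⟩ (i : ℕ) u h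
  have S1 : Av = (C : ℝ) * Sa := by
    have base := sum_over_v hn i hi u (fun x => x i = a) (fun x => prXH J (i : ℕ) x h) C hCall
    rw [hAv, hSa]
    refine Eq.trans (Finset.sum_congr rfl fun v _ => ?_) (base.trans ?_)
    · split_ifs with hv
      · exact sum_ite_congr (fun x => Iff.rfl) _
      · rfl
    · exact congrArg _ (sum_ite_congr (fun x => Iff.rfl) _)
  have S2 : Tv = (C : ℝ) * S := by
    have base := sum_over_v hn i hi u (fun _ => True) (fun x => prXH J (i : ℕ) x h) C hCall
    rw [hTv, hS]
    refine Eq.trans (Finset.sum_congr rfl fun v _ => ?_) (base.trans ?_)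
    · split_ifs with hv
      · exact sum_ite_congr (fun x => (iff_of_eq (and_true _)).symm) _
      · rfl
    · exact congrArg _ (sum_ite_congr (fun x => iff_of_eq (true_and _)) _)
  have S3 : Av * prOne p ⟨(i : ℕ) - 1, Nat.lt_of_le_of_lt (Nat.sub_le _ _) i.isLt⟩ b = Tv * prTwo p ⟨(i : ℕ) - 1, Nat.lt_of_le_of_lt (Nat.sub_le _ _) i.isLt⟩ i b a := by
    rw [hAv, hTv, Finset.sum_mul, Finset.sum_mul]
    refine Finset.sum_congr rfl fun v _ => ?_
    rw [ite_mul, ite_mul, zero_mul, zero_mul]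
    split_ifs with hv
    · exact stepC hn hJ hM hp0 i hi h b hb a v
    · rfl
  rw [S1, S2] at S3
  have hCne : (C : ℝ) ≠ 0 := Nat.cast_ne_zero.mpr hCpos.ne'
  rw [eI, eH]
  apply mul_left_cancel₀ hCne
  calc (C : ℝ) * (Sa * prOne p ⟨(i : ℕ) - 1, Nat.lt_of_le_of_lt (Nat.sub_le _ _) i.isLt⟩ b)
      = (C : ℝ) * Sa * prOne p ⟨(i : ℕ) - 1, Nat.lt_of_le_of_lt (Nat.sub_le _ _) i.isLt⟩ b := by
        ring
    _ = (C : ℝ) * S * prTwo p ⟨(i : ℕ) - 1, Nat.lt_of_le_of_lt (Nat.sub_le _ _) i.isLt⟩ i b a :=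
        S3
    _ = (C : ℝ) * (S * prTwo p ⟨(i : ℕ) - 1, Nat.lt_of_le_of_lt (Nat.sub_le _ _) i.isLt⟩ i b a) := by
        ring
lemma extract (hn : 1 ≤ n) (hJ : IsSequentialMechanism1 p ⟨0, hn⟩ J) (i : Fin n)
    (hi : 0 < (i : ℕ)) (pf : (i : ℕ) - 1 < n) (h : Fin n → Option X) (b : X)
    (hb : h ⟨(i : ℕ) - 1, pf⟩ = some b) (x : Fin n → X) (hx : 0 < prXH J (i : ℕ) x h) :
    x ⟨(i : ℕ) - 1, pf⟩ = b ∧ 0 < p x := by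
  obtain ⟨y, hy⟩ := exists_pos_term hx
  have hay : agreeN (i : ℕ) y h := by
    by_contra hc
    rw [if_neg hc] at hy
    exact lt_irrefl 0 hy
  rw [if_pos hay] at hy
  have hyb : y ⟨(i : ℕ) - 1, pf⟩ = some b := (hay _ (by simp; omega)).trans hb
  have hple : J x y ≤ p x := by
    rw [← hJ.2.1 x]
    exact Finset.single_le_sum (fun z _ => hJ.1 x z) (Finset.mem_univ y)
  refine ⟨?_, lt_of_lt_of_le hy hple⟩
  rcases hJ.2.2.1 x y hy ⟨(i : ℕ) - 1, pf⟩ with h2 | h2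
  · rw [hyb] at h2
    exact (Option.some_injective X h2).symm
  · rw [hyb] at h2
    exact absurd h2 (Option.some_ne_none _)
end Aux
/-- if `X_1, …, X_n` is a Markov chain and `K = {1}` (zero-based: the single
sensitive position `i₀ = 0`), then under the sequential privacy mechanism, for every
position `i > 1` whose previous released symbol satisfies `y_{i-1} = b ≠ ∗`, one has
`P(X_i = a | X_1 = u, Y_{[i-1]} = h) = P(X_i = a | X_{i-1} = b)` for all `a` and all `u`
of positive conditional probability; consequently the mechanism releases position `i`
without erasure with probability one:
`P(Y_i = X_i | X = x, Y_{[i-1]} = h) = 1`. -/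
theorem markov_release_after_release {n : ℕ} (hn : 1 ≤ n) (hX : 2 ≤ Fintype.card X)
    (p : (Fin n → X) → ℝ) (hp0 : ∀ x, 0 ≤ p x) (hp1 : ∑ x : Fin n → X, p x = 1)
    (hMarkov : IsMarkov p)
    (J : (Fin n → X) → (Fin n → Option X) → ℝ)
    (hJ : IsSequentialMechanism1 p ⟨0, hn⟩ J)
    (i : Fin n) (hi : 0 < (i : ℕ))
    (h : Fin n → Option X) (b : X)
    (hb : h ⟨(i : ℕ) - 1, by omega⟩ = some b) :
    (∀ (a u : X), 0 < pr1H J ⟨0, hn⟩ (i : ℕ) u h →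
      cond1 J ⟨0, hn⟩ (i : ℕ) i a u h
        = prTwo p ⟨(i : ℕ) - 1, by omega⟩ i b a / prOne p ⟨(i : ℕ) - 1, by omega⟩ b) ∧
    (∀ x : Fin n → X, 0 < prXH J (i : ℕ) x h →
      prXHY J (i : ℕ) x h i (some (x i)) = prXH J (i : ℕ) x h) := by
  have hii : (i : ℕ) - 1 < n := Nat.lt_of_le_of_lt (Nat.sub_le _ _) i.isLt
  have part1 : ∀ (a u : X), 0 < pr1H J ⟨0, hn⟩ (i : ℕ) u h →
      cond1 J ⟨0, hn⟩ (i : ℕ) i a u h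
        = prTwo p ⟨(i : ℕ) - 1, hii⟩ i b a / prOne p ⟨(i : ℕ) - 1, hii⟩ b := by
    intro a u hu
    -- find a positive-probability x compatible with the history
    have hu' := hu
    rw [pr1H_eq] at hu'
    obtain ⟨x, hx⟩ := exists_pos_term hu'
    have hxu : x ⟨0, hn⟩ = u := by
      by_contra hc
      rw [if_neg hc] at hx
      exact lt_irrefl 0 hx
    rw [if_pos hxu] at hx
    obtain ⟨hxb, hpx⟩ := extract hn hJ i hi hii h b hb x hx
    have hOne : 0 < prOne p ⟨(i : ℕ) - 1, hii⟩ b := by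
      show 0 < ∑ z : Fin n → X, if z ⟨(i : ℕ) - 1, hii⟩ = b then p z else 0
      have hle := Finset.single_le_sum
        (f := fun z : Fin n → X => if z ⟨(i : ℕ) - 1, hii⟩ = b then p z else 0)
        (fun z _ => by split_ifs; exacts [hp0 z, le_refl 0]) (Finset.mem_univ x)
      rw [if_pos hxb] at hle
      exact lt_of_lt_of_le hpx hle
    have K := identityK hn hX hJ hMarkov hp0 i hi h b hb a u
    rw [cond1, div_eq_div_iff hu.ne' hOne.ne']
    calc prI1H J ⟨0, hn⟩ (i : ℕ) i a u h * prOne p ⟨(i : ℕ) - 1, hii⟩ b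
        = pr1H J ⟨0, hn⟩ (i : ℕ) u h * prTwo p ⟨(i : ℕ) - 1, hii⟩ i b a := K
      _ = prTwo p ⟨(i : ℕ) - 1, hii⟩ i b a * pr1H J ⟨0, hn⟩ (i : ℕ) u h := by ring
  refine ⟨part1, ?_⟩
  intro x hx
  have hpr1 : 0 < pr1H J ⟨0, hn⟩ (i : ℕ) (x ⟨0, hn⟩) h := by
    rw [pr1H_eq]
    have hle := Finset.single_le_sum
      (f := fun z : Fin n → X => if z ⟨0, hn⟩ = x ⟨0, hn⟩ then prXH J (i : ℕ) z h else 0)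
      (fun z _ => by split_ifs; exacts [prXH_nonneg hJ.1 _ z h, le_refl 0])
      (Finset.mem_univ x)
    rw [if_pos rfl] at hle
    exact lt_of_lt_of_le hx hle
  obtain ⟨hxb, hpx⟩ := extract hn hJ i hi hii h b hb x hx
  have hTwo : 0 < prTwo p ⟨(i : ℕ) - 1, hii⟩ i b (x i) := by
    show 0 < ∑ z : Fin n → X, if z ⟨(i : ℕ) - 1, hii⟩ = b ∧ z i = x i then p z else 0
    have hle := Finset.single_le_sum
      (f := fun z : Fin n → X => if z ⟨(i : ℕ) - 1, hii⟩ = b ∧ z i = x i then p z else 0)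
      (fun z _ => by split_ifs; exacts [hp0 z, le_refl 0]) (Finset.mem_univ x)
    rw [if_pos ⟨hxb, rfl⟩] at hle
    exact lt_of_lt_of_le hpx hle
  have hOne : 0 < prOne p ⟨(i : ℕ) - 1, hii⟩ b := by
    show 0 < ∑ z : Fin n → X, if z ⟨(i : ℕ) - 1, hii⟩ = b then p z else 0
    have hle := Finset.single_le_sum
      (f := fun z : Fin n → X => if z ⟨(i : ℕ) - 1, hii⟩ = b then p z else 0)
      (fun z _ => by split_ifs; exacts [hp0 z, le_refl 0]) (Finset.mem_univ x)
    rw [if_pos hxb] at hle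
    exact lt_of_lt_of_le hpx hle
  have hval : cond1 J ⟨0, hn⟩ (i : ℕ) i (x i) (x ⟨0, hn⟩) h
      = prTwo p ⟨(i : ℕ) - 1, hii⟩ i b (x i) / prOne p ⟨(i : ℕ) - 1, hii⟩ b :=
    part1 (x i) (x ⟨0, hn⟩) hpr1
  have hMin : minC1 J ⟨0, hn⟩ (i : ℕ) i (x i) h
      = prTwo p ⟨(i : ℕ) - 1, hii⟩ i b (x i) / prOne p ⟨(i : ℕ) - 1, hii⟩ b := by
    have hset : {r : ℝ | ∃ u : X, 0 < pr1H J ⟨0, hn⟩ (i : ℕ) u h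
          ∧ r = cond1 J ⟨0, hn⟩ (i : ℕ) i (x i) u h}
        = {prTwo p ⟨(i : ℕ) - 1, hii⟩ i b (x i) / prOne p ⟨(i : ℕ) - 1, hii⟩ b} := by
      ext r
      simp only [Set.mem_setOf_eq, Set.mem_singleton_iff]
      constructor
      · rintro ⟨u, hu, rfl⟩
        exact part1 (x i) u hu
      · intro hr
        exact ⟨x ⟨0, hn⟩, hpr1, by rw [hr, hval]⟩
    rw [minC1, hset, csInf_singleton]
  have mech := hJ.2.2.2 i x h hx
  rw [mech, hMin, hval, div_self, one_mul]
  exact (div_pos hTwo hOne).ne'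

end GenotypeHiding
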